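/- Let G, M : ℕ → ℂ be multiplicative, let G_M be the canonical Ramanujan coefficient of M, and let p be a prime with G(p) ≠ 1 such that G(p^v) = G(p) + (1 − G(p))·G_M(p^v) for every v ≥ 1. Then w_{p,G} = ∞ if and only if both w_{p,M∗μ} = ∞ and G(p) = (M(p) − 1)/p. -/

import Mathlib

open Filter Finset

noncomputable def mu (n : ℕ) : ℂ := ((ArithmeticFunction.moebius n : ℤ) : ℂ)

/-- Ramanujan sum `c_q(a) = ∑_{d ∣ gcd(q,a)} d · μ(q/d)` (Kluyver's formula). -/
noncomputable def cR (q a : ℕ) : ℂ :=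
  ∑ d ∈ (Nat.gcd q a).divisors, (d : ℂ) * mu (q / d)

/-- Partial sum of the Ramanujan series `R_G(a,x) = ∑_{q ≤ x} G(q) c_q(a)`. -/
noncomputable def RS (G : ℕ → ℂ) (a : ℕ) (x : ℝ) : ℂ :=
  ∑ q ∈ Finset.Icc 1 ⌊x⌋₊, G q * cR q a

/-- Partial sum of the coprime series `S_G(a,x) = ∑_{r ≤ x, (r,a)=1} G(r) μ(r)`. -/
noncomputable def SS (G : ℕ → ℂ) (a : ℕ) (x : ℝ) : ℂ :=
  ∑ r ∈ (Finset.Icc 1 ⌊x⌋₊).filter fun r => Nat.gcd r a = 1, G r * mu r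

/-- Partial sum of the Lucht series `L_G(d,x) = ∑_{K ≤ x} μ(K) G(dK)`. -/
noncomputable def LS (G : ℕ → ℂ) (d : ℕ) (x : ℝ) : ℂ :=
  ∑ K ∈ Finset.Icc 1 ⌊x⌋₊, mu K * G (d * K)

def RTendsto (G : ℕ → ℂ) (a : ℕ) (L : ℂ) : Prop :=
  Tendsto (fun x : ℝ => RS G a x) atTop (nhds L)

def RConv (G : ℕ → ℂ) (a : ℕ) : Prop := ∃ L, RTendsto G a L

def STendsto (G : ℕ → ℂ) (a : ℕ) (L : ℂ) : Prop :=
  Tendsto (fun x : ℝ => SS G a x) atTop (nhds L)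

def SConv (G : ℕ → ℂ) (a : ℕ) : Prop := ∃ L, STendsto G a L

def LTendsto (G : ℕ → ℂ) (d : ℕ) (L : ℂ) : Prop :=
  Tendsto (fun x : ℝ => LS G d x) atTop (nhds L)

def LConv (G : ℕ → ℂ) (d : ℕ) : Prop := ∃ L, LTendsto G d L

/-- `G` is multiplicative: `G(ab) = G(a)G(b)` for coprime positive `a, b`. -/
def IsMult (G : ℕ → ℂ) : Prop :=
  ∀ a b : ℕ, 0 < a → 0 < b → Nat.Coprime a b → G (a * b) = G a * G b

/-- `G` is completely multiplicative. -/
def IsCM (G : ℕ → ℂ) : Prop :=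
  ∀ a b : ℕ, 0 < a → 0 < b → G (a * b) = G a * G b

/-- The completely multiplicative index `w_{p,G}`: the largest `w ∈ ℕ` with
`G(p^k) = G(p)^k` for all `1 ≤ k ≤ w`, and `⊤` if this holds for all `k`. -/
noncomputable def cmIndex (G : ℕ → ℂ) (p : ℕ) : ℕ∞ :=
  ⨆ w ∈ {n : ℕ | ∀ k : ℕ, 1 ≤ k → k ≤ n → G (p ^ k) = G p ^ k}, (w : ℕ∞)

/-- The transparency index `v_{p,G}`: least `K ≥ 0` with `G(p^{K+1}) ≠ 1`, or `⊤`. -/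
noncomputable def trIdx (G : ℕ → ℂ) (p : ℕ) : ℕ∞ :=
  ⨅ K ∈ {K : ℕ | G (p ^ (K + 1)) ≠ 1}, (K : ℕ∞)

/-- A prime `p` is bad for `G` iff `1 ≤ |G(p)| ≤ p`. -/
def IsBad (G : ℕ → ℂ) (p : ℕ) : Prop :=
  1 ≤ ‖G p‖ ∧ ‖G p‖ ≤ p

def IsHyperbad (G : ℕ → ℂ) (p : ℕ) : Prop :=
  p.Prime ∧ IsBad G p ∧ cmIndex G p = ⊤

def IsSimplyBad (G : ℕ → ℂ) (p : ℕ) : Prop :=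
  p.Prime ∧ IsBad G p ∧ cmIndex G p ≠ ⊤

def IsSimplyTransparent (G : ℕ → ℂ) (p : ℕ) : Prop :=
  p.Prime ∧ G p = 1 ∧ cmIndex G p ≠ ⊤

/-- The Ramanujan conductor `N(G) = ∏_{p simply bad} p^{w_{p,G}}`. -/
noncomputable def ramCond (G : ℕ → ℂ) : ℕ :=
  ∏ᶠ p ∈ {p : ℕ | IsSimplyBad G p}, p ^ (cmIndex G p).toNat

/-- The transparency conductor `N_T(G) = ∏_{p simply transparent} p^{v_{p,G}}`. -/
noncomputable def transpCond (G : ℕ → ℂ) : ℕ :=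
  ∏ᶠ p ∈ {p : ℕ | IsSimplyTransparent G p}, p ^ (trIdx G p).toNat

/-- The squarefree radical of `n`. -/
def rad (n : ℕ) : ℕ := ∏ p ∈ n.primeFactors, p

/-- Euler–Ramanujan factor `E_G(a) = ∑_{d ∣ a·rad a} G(d) c_d(a)`. -/
noncomputable def EG (G : ℕ → ℂ) (a : ℕ) : ℂ := ∑ d ∈ (a * rad a).divisors, G d * cR d a

/-- `C_G(a) = ∑_{d ∣ a} G(d) μ(d)`. -/
noncomputable def CGsum (G : ℕ → ℂ) (a : ℕ) : ℂ := ∑ d ∈ a.divisors, G d * mu d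

/-- `D_G(a) = ∑_{d ∣ a} G(d) d`. -/
noncomputable def DGsum (G : ℕ → ℂ) (a : ℕ) : ℂ := ∑ d ∈ a.divisors, G d * (d : ℂ)

/-- `U_G(a) = ∑_{d ∣ a} μ(d) G(da)`. -/
noncomputable def UGsum (G : ℕ → ℂ) (a : ℕ) : ℂ := ∑ d ∈ a.divisors, mu d * G (d * a)

/-- Eratosthenes transform `F' = F ∗ μ`. -/
noncomputable def eratos (F : ℕ → ℂ) (n : ℕ) : ℂ := ∑ d ∈ n.divisors, F d * mu (n / d)

/-- The canonical Ramanujan coefficient of `F`: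
`G_F(q) = ∏_{p ∣ q} (1 - ∑_{K=0}^{v_p(q)-1} F'(p^K)/p^K)`. -/
noncomputable def canonCoeff (F : ℕ → ℂ) (q : ℕ) : ℂ :=
  ∏ p ∈ q.primeFactors,
    (1 - ∑ K ∈ Finset.range (q.factorization p), eratos F (p ^ K) / ((p : ℂ) ^ K))

/-- The opacity core `H_G(q) = G(q·N_T(G))·μ(q)²`. -/
noncomputable def opacityCore (G : ℕ → ℂ) (q : ℕ) : ℂ :=
  G (q * transpCond G) * mu q ^ 2


lemma cmTop_iff (G : ℕ → ℂ) (p : ℕ) :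
    cmIndex G p = ⊤ ↔ ∀ k : ℕ, 1 ≤ k → G (p ^ k) = G p ^ k := by
  constructor
  · intro h k hk
    by_contra hne
    have hle : cmIndex G p ≤ ((k - 1 : ℕ) : ℕ∞) := by
      apply iSup₂_le
      intro w hw
      have hwk : w ≤ k - 1 := by
        by_contra hlt
        exact hne (hw k hk (by omega))
      exact_mod_cast hwk
    rw [h] at hle
    simp at hle
  · intro h
    by_contra hne
    obtain ⟨n, hn⟩ := WithTop.ne_top_iff_exists.mp hne
    have hmem : (n + 1) ∈ {m : ℕ | ∀ k : ℕ, 1 ≤ k → k ≤ m → G (p ^ k) = G p ^ k} :=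
      fun k hk _ => h k hk
    have hle := le_iSup₂ (f := fun (w : ℕ)
      (_ : w ∈ {m : ℕ | ∀ k : ℕ, 1 ≤ k → k ≤ m → G (p ^ k) = G p ^ k}) => (w : ℕ∞)) (n + 1) hmem
    rw [show (⨆ w ∈ {m : ℕ | ∀ k : ℕ, 1 ≤ k → k ≤ m → G (p ^ k) = G p ^ k}, (w : ℕ∞))
        = cmIndex G p from rfl, ← hn, ENat.some_eq_coe] at hle
    have h2 : n + 1 ≤ n := ENat.coe_le_coe.mp hle
    omega

lemma canon_pow (M : ℕ → ℂ) (p v : ℕ) (hp : p.Prime) (hv : 1 ≤ v) :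
    canonCoeff M (p ^ v) = 1 - ∑ K ∈ Finset.range v, eratos M (p ^ K) / (p : ℂ) ^ K := by
  unfold canonCoeff
  rw [Nat.primeFactors_pow _ (by omega), hp.primeFactors, prod_singleton,
    hp.factorization_pow, Finsupp.single_eq_same]

lemma eratos_one (M : ℕ → ℂ) : eratos M 1 = M 1 := by
  simp [eratos, mu]

lemma eratos_prime (M : ℕ → ℂ) (p : ℕ) (hp : p.Prime) : eratos M p = M p - M 1 := by
  unfold eratos
  rw [hp.divisors, Finset.sum_pair hp.one_lt.ne]
  simp [mu, Nat.div_self hp.pos, ArithmeticFunction.moebius_apply_prime hp]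
  ring

/-- Characterization of complete multiplicativity along `p` (Lemma 9.7). -/
theorem stmt_11 (G M : ℕ → ℂ) (hG : IsMult G) (hM : IsMult M)
    (p : ℕ) (hp : p.Prime) (hGp : G p ≠ 1)
    (hrec : ∀ v : ℕ, 1 ≤ v → G (p ^ v) = G p + (1 - G p) * canonCoeff M (p ^ v)) :
    cmIndex G p = ⊤ ↔ (cmIndex (eratos M) p = ⊤ ∧ G p = (M p - 1) / p) := by
  have hp0 : (p : ℂ) ≠ 0 := Nat.cast_ne_zero.mpr hp.pos.ne'
  have h1g : (1 : ℂ) - G p ≠ 0 := sub_ne_zero.mpr (Ne.symm hGp)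
  set g := G p with hg
  have hrec' : ∀ v : ℕ, 1 ≤ v →
      G (p ^ v) = g + (1 - g) * (1 - ∑ K ∈ Finset.range v, eratos M (p ^ K) / (p : ℂ) ^ K) := by
    intro v hv
    rw [hrec v hv, canon_pow M p v hp hv]
  have hM1 : M 1 = 1 := by
    have h1 := hrec' 1 le_rfl
    rw [pow_one, Finset.sum_range_one, pow_zero, pow_zero, eratos_one, div_one] at h1
    have h2 : (1 - g) * (1 - M 1) = 0 := by linear_combination -h1
    rcases mul_eq_zero.mp h2 with h | h
    · exact absurd h h1g
    · linear_combination -h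
  have hstep : ∀ k : ℕ, 1 ≤ k →
      G (p ^ (k + 1)) = G (p ^ k) - (1 - g) * (eratos M (p ^ k) / (p : ℂ) ^ k) := by
    intro k hk
    rw [hrec' (k + 1) (by omega), hrec' k hk, Finset.sum_range_succ]
    ring
  have hEp : eratos M p = M p - 1 := by rw [eratos_prime M p hp, hM1]
  constructor
  · intro h
    have hGall := (cmTop_iff G p).mp h
    have hE : ∀ k : ℕ, 1 ≤ k → eratos M (p ^ k) = (g * p) ^ k := by
      intro k hk
      have h2 := hstep k hk
      rw [hGall (k + 1) (by omega), hGall k hk] at h2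
      have h3 : (1 - g) * (eratos M (p ^ k) / (p : ℂ) ^ k) = (1 - g) * g ^ k := by
        linear_combination h2
      have h4 := mul_left_cancel₀ h1g h3
      rw [mul_pow]
      exact (div_eq_iff (pow_ne_zero k hp0)).mp h4
    have h1 := hE 1 le_rfl
    rw [pow_one, pow_one, hEp] at h1
    constructor
    · refine (cmTop_iff (eratos M) p).mpr fun k hk => ?_
      rw [hE k hk, hEp, h1]
    · rw [eq_div_iff hp0]
      exact h1.symm
  · rintro ⟨hcm, hgp⟩
    have hMp : eratos M p = g * p := by
      rw [hEp, hgp, div_mul_cancel₀ _ hp0]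
    have hE : ∀ k : ℕ, 1 ≤ k → eratos M (p ^ k) = (g * p) ^ k := fun k hk => by
      rw [(cmTop_iff (eratos M) p).mp hcm k hk, hMp]
    refine (cmTop_iff G p).mpr ?_
    intro k hk
    induction k, hk using Nat.le_induction with
    | base => rw [pow_one, pow_one]
    | succ k hk ih =>
      rw [hstep k hk, hE k hk, ih, mul_pow, mul_div_assoc,
        div_self (pow_ne_zero k hp0), mul_one]
      ring
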